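/- Let G be a group and H a proper subgroup of G. If H is either of finite index in G or normal in G, then G is not equal to the union of the conjugates of H, i.e. there exists an element x ∈ G such that x ∉ gHg⁻¹ for every g ∈ G. -/

import Mathlib

open MulAction in
/-- Jordan: a proper subgroup of a finite group doesn't cover the group by conjugates. -/
lemma aux_finite_group {Q : Type*} [Group Q] [Finite Q] (K : Subgroup Q) (hK : K ≠ ⊤) :
    ∃ q : Q, ∀ g : Q, ∀ k ∈ K, q ≠ g * k * g⁻¹ := by
  classical
  cases nonempty_fintype Q
  have : Fintype (Q ⧸ K) := Fintype.ofFinite _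
  by_contra hcon
  push_neg at hcon
  have hfix : ∀ q : Q, ∃ b : Q ⧸ K, q • b = b := by
    intro q
    obtain ⟨g, k, hk, hq⟩ := hcon q
    refine ⟨QuotientGroup.mk g, ?_⟩
    show QuotientGroup.mk (q * g) = QuotientGroup.mk g
    have hqg : q * g = g * k := by rw [hq]; group
    rw [hqg, QuotientGroup.eq]
    simpa using hk
  have hone : ∀ q : Q, 1 ≤ Fintype.card (fixedBy (Q ⧸ K) q) := by
    intro q
    obtain ⟨b, hb⟩ := hfix q
    exact Fintype.card_pos_iff.mpr ⟨⟨b, hb⟩⟩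
  have hΩ : Fintype.card (Quotient (orbitRel Q (Q ⧸ K))) = 1 := by
    have hsub : Subsingleton (Quotient (orbitRel Q (Q ⧸ K))) := by
      constructor
      rintro ⟨a⟩ ⟨b⟩
      exact Quotient.sound ((MulAction.exists_smul_eq Q b a).elim fun g hg => ⟨g, hg⟩)
    have hne : Nonempty (Quotient (orbitRel Q (Q ⧸ K))) :=
      ⟨Quotient.mk _ (QuotientGroup.mk 1)⟩
    exact Fintype.card_eq_one_iff.mpr ⟨Classical.arbitrary _, fun y => Subsingleton.elim y _⟩
  have hburn := MulAction.sum_card_fixedBy_eq_card_orbits_mul_card_group Q (Q ⧸ K)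
  rw [hΩ, one_mul] at hburn
  have hidset : fixedBy (Q ⧸ K) (1 : Q) = Set.univ := by
    ext b; simp [MulAction.mem_fixedBy]
  have hid : Fintype.card (fixedBy (Q ⧸ K) (1 : Q)) = Fintype.card (Q ⧸ K) := by
    exact Fintype.card_congr ((Equiv.setCongr hidset).trans (Equiv.Set.univ _))
  have hcard2 : 2 ≤ Fintype.card (Q ⧸ K) := by
    have h0 : K.index ≠ 0 := Subgroup.FiniteIndex.index_ne_zero
      (self := K.finiteIndex_of_finite_quotient)
    have h1 : K.index ≠ 1 := fun h => hK (Subgroup.index_eq_one.mp h)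
    have : K.index = Fintype.card (Q ⧸ K) := by
      rw [Subgroup.index, Nat.card_eq_fintype_card]
    omega
  have hsplit : ∑ q : Q, Fintype.card (fixedBy (Q ⧸ K) q)
      = Fintype.card (fixedBy (Q ⧸ K) (1 : Q))
        + ∑ q ∈ Finset.univ.erase (1 : Q), Fintype.card (fixedBy (Q ⧸ K) q) :=
    (Finset.add_sum_erase _ _ (Finset.mem_univ 1)).symm
  have hrest : (Finset.univ.erase (1 : Q)).card
      ≤ ∑ q ∈ Finset.univ.erase (1 : Q), Fintype.card (fixedBy (Q ⧸ K) q) := by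
    have := Finset.sum_le_sum (s := Finset.univ.erase (1 : Q))
      (f := fun _ : Q => 1) (g := fun q : Q => Fintype.card (fixedBy (Q ⧸ K) q))
      (fun q _ => hone q)
    simpa using this
  have hec : (Finset.univ.erase (1 : Q)).card = Fintype.card Q - 1 := by
    rw [Finset.card_erase_of_mem (Finset.mem_univ _), Finset.card_univ]
  have hq1 : 1 ≤ Fintype.card Q := Fintype.card_pos
  omega

theorem proper_subgroup_conjugates_ne_univ {G : Type*} [Group G] (H : Subgroup G)
    (hH : H ≠ ⊤) (hfin_or_norm : Finite (G ⧸ H) ∨ H.Normal) :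
    ∃ x : G, ∀ g : G, ∀ h ∈ H, x ≠ g * h * g⁻¹ := by
  rcases hfin_or_norm with hfin | hnorm
  · have : H.FiniteIndex := H.finiteIndex_of_finite_quotient
    set N := H.normalCore with hN
    have : N.FiniteIndex := Subgroup.finiteIndex_normalCore H
    have hQfin : Finite (G ⧸ N) := Subgroup.finite_quotient_of_finiteIndex
    let π := QuotientGroup.mk' N
    have hker : π.ker = N := QuotientGroup.ker_mk' N
    have hNH : N ≤ H := Subgroup.normalCore_le H
    set K := H.map π with hK
    have hKne : K ≠ ⊤ := by
      intro htop
      apply hH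
      have := congrArg (Subgroup.comap π) htop
      rw [Subgroup.comap_map_eq, hker, Subgroup.comap_top, sup_of_le_left hNH] at this
      exact this
    obtain ⟨q, hq⟩ := aux_finite_group K hKne
    obtain ⟨x, rfl⟩ := QuotientGroup.mk'_surjective N q
    refine ⟨x, fun g h hh heq => ?_⟩
    exact hq (π g) (π h) ⟨h, hh, rfl⟩ (by rw [heq]; simp [π])
  · obtain ⟨x, hx⟩ : ∃ x : G, x ∉ H := by
      by_contra hcon
      push_neg at hcon
      exact hH (Subgroup.eq_top_iff' H |>.mpr hcon)
    refine ⟨x, fun g h hh heq => ?_⟩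
    have := hnorm.conj_mem h hh g
    rw [← heq] at this
    exact hx this
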